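/- arXiv:1611.08932 — 3 statements merged into one kernel-verified Lean document; each statement's English description precedes it below -/
import Mathlib

section
/- Fix a complex n×n matrix S and define φ_S(A) = ∫_{U(n)} e^{i Tr(S U A U*)} dU for A ∈ Herm(n), where dU is normalized Haar measure on U(n). Then for all Hermitian matrices A, B and every unitary matrix U₁ ∈ U(n), one has ∫_{U(n)} φ_S(A + U₁ V B V* U₁*) dV = φ_S(A) · φ_S(B); in particular φ_S is a spherical function for the Gelfand pair (U(n) ⋉ Herm(n), U(n)). -/
open MeasureTheory Matrix Complex Finset

noncomputable section

instance matrixMeasurableSpace (n : ℕ) : MeasurableSpace (Matrix (Fin n) (Fin n) ℂ) :=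
  inferInstanceAs (MeasurableSpace (Fin n → Fin n → ℂ))

/-- Build a Hermitian matrix from coordinates: diagonal entries and real/imaginary
parts of the strictly upper-triangular entries. -/
def matrixOfCoords (n : ℕ)
    (c : (Fin n → ℝ) × ({p : Fin n × Fin n // p.1 < p.2} → ℝ) ×
      ({p : Fin n × Fin n // p.1 < p.2} → ℝ)) :
    Matrix (Fin n) (Fin n) ℂ :=
  Matrix.of fun j k =>
    if h : j < k then (c.2.1 ⟨(j, k), h⟩ : ℂ) + (c.2.2 ⟨(j, k), h⟩ : ℝ) * Complex.I
    else if h' : k < j then (c.2.1 ⟨(k, j), h'⟩ : ℂ) - (c.2.2 ⟨(k, j), h'⟩ : ℝ) * Complex.I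
    else (c.1 j : ℂ)

/-- Lebesgue measure `dX` on the space of Hermitian matrices, viewed as a measure on all
complex matrices supported on Hermitian ones. -/
def hermMeasure (n : ℕ) : Measure (Matrix (Fin n) (Fin n) ℂ) :=
  Measure.map (matrixOfCoords n) volume

/-- The spherical function `φ_s(X) = ∫_{U(n)} e^{i Tr(S U X U*)} dU`. -/
def sphericalFn (n : ℕ) (μU : Measure (Matrix.unitaryGroup (Fin n) ℂ))
    (s : Fin n → ℝ) (X : Matrix (Fin n) (Fin n) ℂ) : ℂ :=
  ∫ U : Matrix.unitaryGroup (Fin n) ℂ,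
    Complex.exp (Complex.I *
      (Matrix.diagonal (fun j => (s j : ℂ)) * (U : Matrix (Fin n) (Fin n) ℂ) * X *
        star (U : Matrix (Fin n) (Fin n) ℂ)).trace) ∂μU

/-- The spherical transform `f̂(s) = ∫ f(X) φ_s(−X) dX`. -/
def sphericalTransform (n : ℕ) (μU : Measure (Matrix.unitaryGroup (Fin n) ℂ))
    (f : Matrix (Fin n) (Fin n) ℂ → ℝ) (s : Fin n → ℝ) : ℂ :=
  ∫ X, (f X : ℂ) * sphericalFn n μU s (-X) ∂(hermMeasure n)

/-- Vandermonde determinant `Δ_n(x) = ∏_{j<k} (x_k - x_j)`. -/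
def vdm (n : ℕ) (x : Fin n → ℝ) : ℝ :=
  ∏ j : Fin n, ∏ k ∈ Finset.Ioi j, (x k - x j)


section AuxSpherical

set_option maxHeartbeats 1000000

instance matrixBorelSpace (n : ℕ) : BorelSpace (Matrix (Fin n) (Fin n) ℂ) :=
  inferInstanceAs (BorelSpace (Fin n → Fin n → ℂ))

variable {n : ℕ}

lemma unitary_entry_norm_le (U : Matrix.unitaryGroup (Fin n) ℂ) (i j : Fin n) :
    ‖(U : Matrix (Fin n) (Fin n) ℂ) i j‖ ≤ 1 := by
  have h : ((U : Matrix (Fin n) (Fin n) ℂ) * star (U : Matrix (Fin n) (Fin n) ℂ)) i i = 1 := by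
    rw [U.2.2]; simp [Matrix.one_apply]
  have h2 : (∑ k, Complex.normSq ((U : Matrix (Fin n) (Fin n) ℂ) i k) : ℂ) = 1 := by
    rw [← h, Matrix.mul_apply]
    simp [Matrix.star_apply, Complex.mul_conj]
  have h3 : (∑ k, Complex.normSq ((U : Matrix (Fin n) (Fin n) ℂ) i k)) = 1 := by
    exact_mod_cast h2
  have h4 : Complex.normSq ((U : Matrix (Fin n) (Fin n) ℂ) i j) ≤ 1 := by
    rw [← h3]
    exact Finset.single_le_sum (fun k _ => Complex.normSq_nonneg _) (Finset.mem_univ j)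
  have := Complex.normSq_eq_norm_sq ((U : Matrix (Fin n) (Fin n) ℂ) i j)
  nlinarith [norm_nonneg ((U : Matrix (Fin n) (Fin n) ℂ) i j)]

instance : CompactSpace (Matrix.unitaryGroup (Fin n) ℂ) := by
  suffices h : IsCompact (Matrix.unitaryGroup (Fin n) ℂ : Set (Matrix (Fin n) (Fin n) ℂ)) by
    exact isCompact_iff_compactSpace.mp h
  have hK : IsCompact (Set.pi (Set.univ : Set (Fin n)) fun _ =>
      Set.pi (Set.univ : Set (Fin n)) fun _ => Metric.closedBall (0:ℂ) 1) :=
    isCompact_univ_pi fun _ => isCompact_univ_pi fun _ => isCompact_closedBall 0 1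
  have hclosed : IsClosed (Matrix.unitaryGroup (Fin n) ℂ : Set (Matrix (Fin n) (Fin n) ℂ)) := by
    have he : (Matrix.unitaryGroup (Fin n) ℂ : Set (Matrix (Fin n) (Fin n) ℂ)) =
        (fun M : Matrix (Fin n) (Fin n) ℂ => (star M * M, M * star M)) ⁻¹' {(1, 1)} := by
      ext M
      simp only [SetLike.mem_coe, Set.mem_preimage, Set.mem_singleton_iff, Prod.mk.injEq]
      exact Unitary.mem_iff
    rw [he]
    exact IsClosed.preimage
      ((continuous_id.matrix_conjTranspose.matrix_mul continuous_id).prodMk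
        (continuous_id.matrix_mul continuous_id.matrix_conjTranspose)) isClosed_singleton
  exact hK.of_isClosed_subset hclosed fun M hM => Set.mem_univ_pi.mpr fun i =>
    Set.mem_univ_pi.mpr fun j => by
      simpa using unitary_entry_norm_le ⟨M, hM⟩ i j

instance matrixSecondCountable (n : ℕ) : SecondCountableTopology (Matrix (Fin n) (Fin n) ℂ) :=
  inferInstanceAs (SecondCountableTopology (Fin n → Fin n → ℂ))

instance unitaryGroupSecondCountable (n : ℕ) :
    SecondCountableTopology (Matrix.unitaryGroup (Fin n) ℂ) :=
  inferInstanceAs (SecondCountableTopology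
    ((Matrix.unitaryGroup (Fin n) ℂ : Set (Matrix (Fin n) (Fin n) ℂ))))

instance unitaryGroupOpensMeasurable (n : ℕ) :
    OpensMeasurableSpace (Matrix.unitaryGroup (Fin n) ℂ) :=
  inferInstanceAs (OpensMeasurableSpace
    ((Matrix.unitaryGroup (Fin n) ℂ : Set (Matrix (Fin n) (Fin n) ℂ))))

instance unitaryGroupBorel (n : ℕ) : BorelSpace (Matrix.unitaryGroup (Fin n) ℂ) :=
  inferInstanceAs (BorelSpace
    ((Matrix.unitaryGroup (Fin n) ℂ : Set (Matrix (Fin n) (Fin n) ℂ))))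


end AuxSpherical

set_option maxHeartbeats 1000000 in
/-- The function `φ_S(A) = ∫_{U(n)} e^{i Tr(S U A U*)} dU` satisfies the
spherical functional equation `∫_{U(n)} φ_S(A + U₁ V B V* U₁*) dV = φ_S(A) φ_S(B)` for all
Hermitian `A`, `B` and every unitary `U₁`, i.e. it is a spherical function for the Gelfand
pair `(U(n) ⋉ Herm(n), U(n))`. -/
theorem sphericalFn_functional_equation
    (n : ℕ) (μU : Measure (Matrix.unitaryGroup (Fin n) ℂ))
    [IsProbabilityMeasure μU] [μU.IsMulLeftInvariant]
    (S : Matrix (Fin n) (Fin n) ℂ)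
    (φ : Matrix (Fin n) (Fin n) ℂ → ℂ)
    (hφ : ∀ A, φ A = ∫ U : Matrix.unitaryGroup (Fin n) ℂ,
      Complex.exp (Complex.I *
        (S * (U : Matrix (Fin n) (Fin n) ℂ) * A * star (U : Matrix (Fin n) (Fin n) ℂ)).trace) ∂μU)
    (A B : Matrix (Fin n) (Fin n) ℂ) (hA : A.IsHermitian) (hB : B.IsHermitian)
    (U₁ : Matrix.unitaryGroup (Fin n) ℂ) :
    ∫ V : Matrix.unitaryGroup (Fin n) ℂ,
        φ (A + (U₁ : Matrix (Fin n) (Fin n) ℂ) * (V : Matrix (Fin n) (Fin n) ℂ) * B *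
          star (V : Matrix (Fin n) (Fin n) ℂ) * star (U₁ : Matrix (Fin n) (Fin n) ℂ)) ∂μU =
      φ A * φ B := by
  set gA : Matrix.unitaryGroup (Fin n) ℂ → ℂ := fun U => Complex.exp (Complex.I *
    (S * (U : Matrix (Fin n) (Fin n) ℂ) * A * star (U : Matrix (Fin n) (Fin n) ℂ)).trace) with hgA
  set h : Matrix.unitaryGroup (Fin n) ℂ → ℂ := fun W => Complex.exp (Complex.I *
    (S * (W : Matrix (Fin n) (Fin n) ℂ) * B * star (W : Matrix (Fin n) (Fin n) ℂ)).trace) with hh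
  -- continuity of coercion
  have hcoe : Continuous (fun W : Matrix.unitaryGroup (Fin n) ℂ => (W : Matrix (Fin n) (Fin n) ℂ)) := continuous_subtype_val
  have hgAcont : Continuous gA := by
    apply Complex.continuous_exp.comp
    apply continuous_const.mul
    exact ((((continuous_const.matrix_mul hcoe).matrix_mul continuous_const).matrix_mul
      hcoe.matrix_conjTranspose).matrix_trace)
  have hhcont : Continuous h := by
    apply Complex.continuous_exp.comp
    apply continuous_const.mul
    exact ((((continuous_const.matrix_mul hcoe).matrix_mul continuous_const).matrix_mul
      hcoe.matrix_conjTranspose).matrix_trace)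
  -- Step 1: pointwise identity for the integrand
  have key : ∀ V : Matrix.unitaryGroup (Fin n) ℂ,
      φ (A + (U₁ : Matrix (Fin n) (Fin n) ℂ) * (V : Matrix (Fin n) (Fin n) ℂ) * B *
          star (V : Matrix (Fin n) (Fin n) ℂ) * star (U₁ : Matrix (Fin n) (Fin n) ℂ)) =
        ∫ U : Matrix.unitaryGroup (Fin n) ℂ, gA U * h (U * (U₁ * V)) ∂μU := by
    intro V
    rw [hφ]
    congr 1
    funext U
    have hmat : S * (U : Matrix (Fin n) (Fin n) ℂ) *
        (A + (U₁ : Matrix (Fin n) (Fin n) ℂ) * (V : Matrix (Fin n) (Fin n) ℂ) * B *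
          star (V : Matrix (Fin n) (Fin n) ℂ) * star (U₁ : Matrix (Fin n) (Fin n) ℂ)) *
        star (U : Matrix (Fin n) (Fin n) ℂ) =
        S * (U : Matrix (Fin n) (Fin n) ℂ) * A * star (U : Matrix (Fin n) (Fin n) ℂ) +
        S * ((U * (U₁ * V) : Matrix.unitaryGroup (Fin n) ℂ) : Matrix (Fin n) (Fin n) ℂ) * B *
          star (((U * (U₁ * V) : Matrix.unitaryGroup (Fin n) ℂ)) : Matrix (Fin n) (Fin n) ℂ) := by
      push_cast
      simp only [StarMul.star_mul]
      noncomm_ring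
    rw [hmat, Matrix.trace_add, mul_add, Complex.exp_add]
  simp_rw [key]
  -- Step 2: Fubini
  have hint : Integrable (Function.uncurry fun (V : Matrix.unitaryGroup (Fin n) ℂ) (U : Matrix.unitaryGroup (Fin n) ℂ) => gA U * h (U * (U₁ * V)))
      (μU.prod μU) := by
    apply Continuous.integrable_of_hasCompactSupport
    · exact (hgAcont.comp continuous_snd).mul
        (hhcont.comp (continuous_snd.mul (continuous_const.mul continuous_fst)))
    · exact IsCompact.of_isClosed_subset isCompact_univ (isClosed_tsupport _) (Set.subset_univ _)
  rw [MeasureTheory.integral_integral_swap hint]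
  -- Step 3: invariance and factorization
  have inner : ∀ U : Matrix.unitaryGroup (Fin n) ℂ, (∫ V : Matrix.unitaryGroup (Fin n) ℂ, gA U * h (U * (U₁ * V)) ∂μU) = gA U * φ B := by
    intro U
    rw [MeasureTheory.integral_const_mul]
    congr 1
    have : (∫ V : Matrix.unitaryGroup (Fin n) ℂ, h (U * (U₁ * V)) ∂μU) = ∫ V : Matrix.unitaryGroup (Fin n) ℂ, h ((U * U₁) * V) ∂μU := by
      simp_rw [mul_assoc]
    rw [this, MeasureTheory.integral_mul_left_eq_self h (U * U₁), hφ]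
  simp_rw [inner]
  rw [MeasureTheory.integral_mul_const, hφ A]
end
end

section
/- Fix an integer n ≥ 1 and α > −1, and let L be the operator (Lf)(x) = (1/Γ(α+n)) ∫_0^∞ s^{α+n−1} e^{−s} f(x+s) ds. Let p_k be a monic polynomial of degree k and define P_k(x) = ∑_{j=0}^{k} (−1)^j binom(α+n, j) p_k^{(j)}(x). Then P_k is a monic polynomial of degree k and L(P_k) = p_k. -/
open MeasureTheory Finset

noncomputable section

/-- Generalized binomial coefficient `binom(β, j) = β(β-1)⋯(β-j+1)/j!`. -/
def gbinom (β : ℝ) (j : ℕ) : ℝ := (∏ i ∈ Finset.range j, (β - i)) / (j.factorial : ℝ)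

/-- The operator `(Lf)(x) = (1/Γ(α+n)) ∫_0^∞ s^{α+n-1} e^{-s} f(x+s) ds`. -/
def Lop (n : ℕ) (α : ℝ) (f : ℝ → ℝ) (x : ℝ) : ℝ :=
  (1 / Real.Gamma (α + n)) *
    ∫ s in Set.Ioi (0 : ℝ), s ^ (α + n - 1) * Real.exp (-s) * f (x + s)

namespace LopAux

/-- `Ac β j = (-1)^j binom(β, j)`. -/
def Ac (β : ℝ) (j : ℕ) : ℝ := (-1 : ℝ) ^ j * gbinom β j

/-- `Bc β m = β(β+1)⋯(β+m-1)/m!`. -/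
def Bc (β : ℝ) (m : ℕ) : ℝ := (∏ i ∈ Finset.range m, (β + i)) / (m.factorial : ℝ)

@[simp] lemma Ac_zero (β : ℝ) : Ac β 0 = 1 := by simp [Ac, gbinom]

@[simp] lemma Bc_zero (β : ℝ) : Bc β 0 = 1 := by simp [Bc]

lemma Ac_succ (β : ℝ) (j : ℕ) :
    ((j : ℝ) + 1) * Ac β (j + 1) = ((j : ℝ) - β) * Ac β j := by
  have hj : (j.factorial : ℝ) ≠ 0 := Nat.cast_ne_zero.mpr j.factorial_ne_zero
  simp only [Ac, gbinom, Finset.prod_range_succ, Nat.factorial_succ, Nat.cast_mul,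
    Nat.cast_add, Nat.cast_one, pow_succ]
  field_simp
  ring

lemma Bc_succ (β : ℝ) (m : ℕ) :
    ((m : ℝ) + 1) * Bc β (m + 1) = (β + m) * Bc β m := by
  have hm : (m.factorial : ℝ) ≠ 0 := Nat.cast_ne_zero.mpr m.factorial_ne_zero
  simp only [Bc, Finset.prod_range_succ, Nat.factorial_succ, Nat.cast_mul,
    Nat.cast_add, Nat.cast_one]
  field_simp

/-- The convolution sum. -/
def U (β : ℝ) (l : ℕ) : ℝ := ∑ j ∈ Finset.range (l + 1), Ac β j * Bc β (l - j)

@[simp] lemma U_zero (β : ℝ) : U β 0 = 1 := by simp [U]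

lemma U_rec (β : ℝ) (l : ℕ) :
    ((l : ℝ) + 1) * U β (l + 1) = (l : ℝ) * U β l := by
  have key : ((l : ℝ) + 1) * U β (l + 1)
      = (∑ j ∈ Finset.range (l + 1), ((j : ℝ) - β) * (Ac β j * Bc β (l - j)))
        + ∑ j ∈ Finset.range (l + 1), (β + (l - j : ℕ)) * (Ac β j * Bc β (l - j)) := by
    have expand : ∀ j ∈ Finset.range (l + 2),
        ((l : ℝ) + 1) * (Ac β j * Bc β (l + 1 - j))
          = (j : ℝ) * Ac β j * Bc β (l + 1 - j)
            + Ac β j * (((l + 1 - j : ℕ) : ℝ) * Bc β (l + 1 - j)) := by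
      intro j hj
      rw [Finset.mem_range] at hj
      have : ((l + 1 - j : ℕ) : ℝ) = (l : ℝ) + 1 - j := by
        have : j ≤ l + 1 := by omega
        push_cast [Nat.cast_sub this]
        ring
      rw [this]; ring
    rw [U, Finset.mul_sum, Finset.sum_congr rfl expand, Finset.sum_add_distrib]
    congr 1
    · -- shift: ∑_{j∈range(l+2)} j * Ac j * Bc (l+1-j) = ∑_{j∈range(l+1)} (j-β) Ac j Bc (l-j)
      rw [Finset.sum_range_succ' (fun j => (j : ℝ) * Ac β j * Bc β (l + 1 - j)) (l + 1)]
      simp only [Nat.cast_zero, zero_mul, add_zero, Nat.cast_add, Nat.cast_one]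
      refine Finset.sum_congr rfl ?_
      intro j hj
      rw [Finset.mem_range] at hj
      have h1 : l + 1 - (j + 1) = l - j := by omega
      rw [h1, Ac_succ β j]
      ring
    · -- peel last: ∑_{j∈range(l+2)} Ac j * ((l+1-j) * Bc (l+1-j))
      rw [Finset.sum_range_succ (fun j => Ac β j * (((l + 1 - j : ℕ) : ℝ) * Bc β (l + 1 - j))) (l + 1)]
      simp only [Nat.sub_self, Nat.cast_zero, zero_mul, mul_zero, add_zero]
      refine Finset.sum_congr rfl ?_
      intro j hj
      rw [Finset.mem_range] at hj
      have h1 : l + 1 - j = (l - j) + 1 := by omega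
      rw [h1]
      push_cast [Nat.cast_sub (by omega : j ≤ l)]
      rw [show ((l : ℝ) - j + 1) * Bc β (l - j + 1) = ((((l - j : ℕ) : ℝ)) + 1) * Bc β ((l - j) + 1) by
        push_cast [Nat.cast_sub (by omega : j ≤ l)]; ring, Bc_succ]
      push_cast [Nat.cast_sub (by omega : j ≤ l)]
      ring
  have : ((l : ℝ) + 1) * U β (l + 1)
      = ∑ j ∈ Finset.range (l + 1), (l : ℝ) * (Ac β j * Bc β (l - j)) := by
    rw [key, ← Finset.sum_add_distrib]
    refine Finset.sum_congr rfl ?_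
    intro j hj
    rw [Finset.mem_range] at hj
    push_cast [Nat.cast_sub (by omega : j ≤ l)]
    ring
  rw [this, ← Finset.mul_sum, U]

lemma U_succ (β : ℝ) (l : ℕ) : U β (l + 1) = 0 := by
  induction l with
  | zero =>
    have h := U_rec β 0
    simp only [Nat.cast_zero, zero_add, zero_mul, one_mul] at h
    exact h
  | succ m ih =>
    have h := U_rec β (m + 1)
    rw [ih, mul_zero] at h
    have hpos : (0 : ℝ) < ((m + 1 : ℕ) : ℝ) + 1 := by positivity
    exact (mul_eq_zero.mp h).resolve_left hpos.ne'

/-- The Gamma-integral of `s^(β-1) e^{-s} s^m`. -/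
lemma integral_pow (β : ℝ) (hβ : 0 < β) (m : ℕ) :
    ∫ s in Set.Ioi (0 : ℝ), s ^ (β - 1) * Real.exp (-s) * s ^ m
      = Real.Gamma (β + m) := by
  rw [Real.Gamma_eq_integral (by positivity : (0:ℝ) < β + m)]
  refine setIntegral_congr_fun measurableSet_Ioi ?_
  intro s hs
  have hs' : (0 : ℝ) < s := hs
  dsimp only
  rw [show β + (m : ℝ) - 1 = (β - 1) + m by ring, Real.rpow_add hs',
    Real.rpow_natCast]
  ring

lemma integrable_pow (β : ℝ) (hβ : 0 < β) (m : ℕ) :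
    IntegrableOn (fun s : ℝ => s ^ (β - 1) * Real.exp (-s) * s ^ m) (Set.Ioi 0) := by
  have h := Real.GammaIntegral_convergent (by positivity : (0:ℝ) < β + m)
  refine h.congr_fun ?_ measurableSet_Ioi
  intro s hs
  have hs' : (0 : ℝ) < s := hs
  dsimp only
  rw [show β + (m : ℝ) - 1 = (β - 1) + m by ring, Real.rpow_add hs',
    Real.rpow_natCast]
  ring

lemma Gamma_add_nat (β : ℝ) (hβ : 0 < β) (m : ℕ) :
    Real.Gamma (β + m) = (∏ i ∈ Finset.range m, (β + i)) * Real.Gamma β := by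
  induction m with
  | zero => simp
  | succ m ih =>
    have h1 : β + (m + 1 : ℕ) = (β + m) + 1 := by push_cast; ring
    rw [h1, Real.Gamma_add_one (by positivity), ih, Finset.prod_range_succ]
    ring

/-- `Lop` applied to a polynomial. -/
lemma Lop_poly (n : ℕ) (α : ℝ) (hβ : 0 < α + n) (q : Polynomial ℝ) (M : ℕ)
    (hM : q.natDegree ≤ M) (x : ℝ) :
    Lop n α (fun t => q.eval t) x
      = ∑ m ∈ Finset.range (M + 1),
          Bc (α + n) m * (Polynomial.derivative^[m] q).eval x := by
  set β : ℝ := α + n with hβdef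
  have hΓ : Real.Gamma β ≠ 0 := (Real.Gamma_pos_of_pos hβ).ne'
  -- coefficients of the Taylor expansion
  set a : ℕ → ℝ := fun m => ((Polynomial.taylor x q).coeff m) with ha
  have heval : ∀ s : ℝ, q.eval (x + s) = ∑ m ∈ Finset.range (M + 1), a m * s ^ m := by
    intro s
    have h1 : q.eval (x + s) = (Polynomial.taylor x q).eval s := by
      rw [Polynomial.taylor_eval, add_comm]
    rw [h1, Polynomial.eval_eq_sum_range'
      (lt_of_le_of_lt (by rw [Polynomial.natDegree_taylor]; exact hM) (Nat.lt_succ_self M)) s]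
  have hint : ∫ s in Set.Ioi (0 : ℝ), s ^ (β - 1) * Real.exp (-s) * q.eval (x + s)
      = ∑ m ∈ Finset.range (M + 1), a m * Real.Gamma (β + m) := by
    have step1 : ∫ s in Set.Ioi (0 : ℝ), s ^ (β - 1) * Real.exp (-s) * q.eval (x + s)
        = ∫ s in Set.Ioi (0 : ℝ),
            ∑ m ∈ Finset.range (M + 1), a m * (s ^ (β - 1) * Real.exp (-s) * s ^ m) := by
      refine setIntegral_congr_fun measurableSet_Ioi ?_
      intro s _
      dsimp only
      rw [heval s, Finset.mul_sum]
      refine Finset.sum_congr rfl ?_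
      intro m _
      ring
    rw [step1, integral_finset_sum]
    · refine Finset.sum_congr rfl ?_
      intro m _
      rw [MeasureTheory.integral_const_mul, integral_pow β hβ m]
    · intro m _
      exact (integrable_pow β hβ m).const_mul _
  rw [Lop, hint, Finset.mul_sum]
  refine Finset.sum_congr rfl ?_
  intro m hm
  have hfac : (m.factorial : ℝ) ≠ 0 := Nat.cast_ne_zero.mpr m.factorial_ne_zero
  have hder : (Polynomial.derivative^[m] q).eval x = m.factorial * a m := by
    rw [ha]
    simp only [Polynomial.taylor_coeff]
    rw [← Polynomial.factorial_smul_hasseDeriv]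
    simp [Polynomial.eval_smul, nsmul_eq_mul]
  rw [Gamma_add_nat β hβ m, hder, Bc]
  field_simp
  rw [← hβdef]
  field_simp

/-- Triangle reindexing. -/
lemma triangle (g : ℕ → ℕ → ℝ) (N : ℕ) :
    ∑ j ∈ Finset.range N, ∑ m ∈ Finset.range (N - j), g j m
      = ∑ l ∈ Finset.range N, ∑ j ∈ Finset.range (l + 1), g j (l - j) := by
  induction N with
  | zero => simp
  | succ N ih =>
    have h1 : ∀ j ∈ Finset.range (N + 1),
        ∑ m ∈ Finset.range (N + 1 - j), g j m
          = ∑ m ∈ Finset.range (N - j), g j m + g j (N - j) := by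
      intro j hj
      rw [Finset.mem_range] at hj
      rw [show N + 1 - j = (N - j) + 1 by omega, Finset.sum_range_succ]
    rw [Finset.sum_congr rfl h1, Finset.sum_add_distrib,
      Finset.sum_range_succ (fun j => ∑ m ∈ Finset.range (N - j), g j m) N,
      Nat.sub_self]
    simp only [Finset.range_zero, Finset.sum_empty, add_zero]
    rw [ih, Finset.sum_range_succ (fun l => ∑ j ∈ Finset.range (l + 1), g j (l - j)) N]

end LopAux

open LopAux Polynomial

/-- If `p_k` is a monic polynomial of degree `k` and
`P_k = ∑_{j=0}^k (-1)^j binom(α+n, j) p_k^{(j)}`, then `P_k` is a monic polynomial of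
degree `k` and `L(P_k) = p_k`. -/
theorem Lop_inverse_on_monic
    (n : ℕ) (hn : 1 ≤ n) (α : ℝ) (hα : -1 < α)
    (k : ℕ) (p : Polynomial ℝ) (hp : p.Monic) (hdeg : p.natDegree = k)
    (P : Polynomial ℝ)
    (hP : P = ∑ j ∈ Finset.range (k + 1),
      Polynomial.C ((-1 : ℝ) ^ j * gbinom (α + n) j) * Polynomial.derivative^[j] p) :
    P.Monic ∧ P.natDegree = k ∧ ∀ x : ℝ, Lop n α (fun t => P.eval t) x = p.eval x := by
  set β : ℝ := α + n with hβdef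
  have hβ : 0 < β := by
    have : (1 : ℝ) ≤ (n : ℝ) := by exact_mod_cast hn
    simp only [hβdef]; linarith
  -- rewrite P as p + lower order terms
  set Q : Polynomial ℝ := ∑ i ∈ Finset.range k,
      Polynomial.C ((-1 : ℝ) ^ (i + 1) * gbinom β (i + 1))
        * Polynomial.derivative^[i + 1] p with hQ
  have hPQ : P = Q + p := by
    rw [hP, Finset.sum_range_succ' _ k]
    congr 1
    simp [gbinom]
  have hQdeg : Q.degree < p.degree := by
    have hpdeg : p.degree = (k : WithBot ℕ) := by
      rw [Polynomial.degree_eq_natDegree hp.ne_zero, hdeg]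
    rw [hpdeg, hQ]
    refine lt_of_le_of_lt (Polynomial.degree_sum_le _ _) ?_
    rw [Finset.sup_lt_iff (by exact WithBot.bot_lt_coe k)]
    intro i hi
    rw [Finset.mem_range] at hi
    calc (Polynomial.C ((-1 : ℝ) ^ (i + 1) * gbinom β (i + 1))
            * Polynomial.derivative^[i + 1] p).degree
        ≤ (Polynomial.derivative^[i + 1] p).degree := by
          rcases eq_or_ne ((-1 : ℝ) ^ (i + 1) * gbinom β (i + 1)) 0 with h | h
          · simp [h]
          · rw [Polynomial.degree_C_mul h]
      _ ≤ ((Polynomial.derivative^[i + 1] p).natDegree : WithBot ℕ) :=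
          Polynomial.degree_le_natDegree
      _ < (k : WithBot ℕ) := by
          have h1 : (Polynomial.derivative^[i + 1] p).natDegree ≤ p.natDegree - (i + 1) :=
            Polynomial.natDegree_iterate_derivative p (i + 1)
          have h2 : (Polynomial.derivative^[i + 1] p).natDegree < k := by omega
          exact_mod_cast h2
  have hPmonic : P.Monic := by
    rw [hPQ, add_comm]
    exact hp.add_of_left hQdeg
  have hPnat : P.natDegree = k := by
    have hdp : (p + Q).degree = p.degree := Polynomial.degree_add_eq_left_of_degree_lt hQdeg
    rw [hPQ, add_comm, Polynomial.natDegree_eq_of_degree_eq hdp, hdeg]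
  refine ⟨hPmonic, hPnat, ?_⟩
  intro x
  -- evaluate Lop
  rw [Lop_poly n α hβ P k (le_of_eq hPnat) x]
  -- expand the iterated derivatives of P
  have hDP : ∀ m : ℕ, (Polynomial.derivative^[m] P).eval x
      = ∑ j ∈ Finset.range (k + 1), Ac β j * (Polynomial.derivative^[j + m] p).eval x := by
    intro m
    rw [hP]
    rw [Polynomial.iterate_derivative_sum, Polynomial.eval_finset_sum]
    refine Finset.sum_congr rfl ?_
    intro j _
    rw [Polynomial.iterate_derivative_C_mul, show j + m = m + j by omega,
      Function.iterate_add_apply, Polynomial.eval_mul, Polynomial.eval_C, Ac]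
  -- the value of the iterated derivative, zero beyond degree k
  set f : ℕ → ℝ := fun l => (Polynomial.derivative^[l] p).eval x with hf
  have hfzero : ∀ l, k < l → f l = 0 := by
    intro l hl
    rw [hf]
    simp only []
    rw [Polynomial.iterate_derivative_eq_zero (by omega : p.natDegree < l)]
    simp
  have step : ∑ m ∈ Finset.range (k + 1), Bc β m * (Polynomial.derivative^[m] P).eval x
      = ∑ j ∈ Finset.range (k + 1), ∑ m ∈ Finset.range (k + 1),
          Ac β j * Bc β m * f (j + m) := by
    rw [Finset.sum_comm]
    refine Finset.sum_congr rfl ?_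
    intro m _
    rw [hDP m, Finset.mul_sum]
    refine Finset.sum_congr rfl ?_
    intro j _
    simp only [hf]
    ring
  rw [step]
  -- truncate each inner sum
  have trunc : ∀ j ∈ Finset.range (k + 1),
      ∑ m ∈ Finset.range (k + 1), Ac β j * Bc β m * f (j + m)
        = ∑ m ∈ Finset.range (k + 1 - j), Ac β j * Bc β m * f (j + m) := by
    intro j hj
    rw [Finset.mem_range] at hj
    refine (Finset.sum_subset (Finset.range_subset_range.mpr (by omega)) ?_).symm
    intro m _ hm
    rw [Finset.mem_range, not_lt] at hm
    rw [hfzero (j + m) (by omega), mul_zero]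
  rw [Finset.sum_congr rfl trunc, triangle (fun j m => Ac β j * Bc β m * f (j + m)) (k + 1)]
  have diag : ∀ l ∈ Finset.range (k + 1),
      ∑ j ∈ Finset.range (l + 1), Ac β j * Bc β (l - j) * f (j + (l - j))
        = U β l * f l := by
    intro l _
    rw [U, Finset.sum_mul]
    refine Finset.sum_congr rfl ?_
    intro j hj
    rw [Finset.mem_range] at hj
    rw [show j + (l - j) = l by omega]
  rw [Finset.sum_congr rfl diag, Finset.sum_range_succ' (fun l => U β l * f l) k]
  simp only [U_succ, zero_mul, Finset.sum_const_zero, U_zero, one_mul, zero_add]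
  rw [hf]
  simp
end
end

section
/- Fix an integer n ≥ 1 and α > −1. Let p_0,…,p_{n−1} be monic polynomials with deg p_j = j and let q_0,…,q_{n−1} be integrable functions on ℝ satisfying the biorthogonality ∫_{−∞}^{∞} p_j(x) q_k(x) dx = δ_{j,k}, with x^j q_k(x) integrable for all relevant j,k. Define Q_k(y) = (1/Γ(α+n)) ∫_0^∞ x^{α+n−1} e^{−x} q_k(y−x) dx and P_j(x) = ∑_{i=0}^{j} (−1)^i binom(α+n, i) p_j^{(i)}(x). Then ∫_{−∞}^{∞} P_j(x) Q_k(x) dx = δ_{j,k} for all j, k = 0,…,n−1. -/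
open MeasureTheory Finset

noncomputable section

/-- rising factorial -/
def Rr (x : ℝ) (i : ℕ) : ℝ := ∏ t ∈ Finset.range i, (x + t)

lemma Rr_zero (x : ℝ) : Rr x 0 = 1 := by simp [Rr]

lemma Rr_succ (x : ℝ) (i : ℕ) : Rr x (i + 1) = Rr x i * (x + i) := by
  simp [Rr, Finset.prod_range_succ]

lemma Rr_zero_left (m : ℕ) : Rr 0 m = if m = 0 then 1 else 0 := by
  cases m with
  | zero => simp [Rr]
  | succ m => simp [Rr, Finset.prod_range_succ']

/-- Vandermonde for rising factorials -/
lemma Rr_vandermonde (m : ℕ) : ∀ x y : ℝ,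
    ∑ i ∈ range (m + 1), (m.choose i : ℝ) * Rr x i * Rr y (m - i) = Rr (x + y) m := by
  induction m with
  | zero => intro x y; simp [Rr]
  | succ m ih =>
    intro x y
    have key : ∀ i ∈ range (m + 1),
        (m.choose i : ℝ) * (Rr x i * Rr y (m + 1 - i) + Rr x (i+1) * Rr y (m - i))
        = (x + y + m) * ((m.choose i : ℝ) * Rr x i * Rr y (m - i)) := by
      intro i hi
      rw [mem_range, Nat.lt_succ_iff] at hi
      have h1 : m + 1 - i = (m - i) + 1 := by omega
      rw [h1, Rr_succ, Rr_succ]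
      have : ((m - i : ℕ) : ℝ) = (m : ℝ) - (i : ℝ) := by
        rw [Nat.cast_sub hi]
      rw [this]; ring
    have split : ∑ i ∈ range (m + 2), ((m+1).choose i : ℝ) * Rr x i * Rr y (m + 1 - i)
        = ∑ i ∈ range (m + 1), (m.choose i : ℝ) *
            (Rr x i * Rr y (m + 1 - i) + Rr x (i+1) * Rr y (m - i)) := by
      have e1 : ∑ i ∈ range (m + 2), ((m+1).choose i : ℝ) * Rr x i * Rr y (m + 1 - i)
          = ((m+1).choose 0 : ℝ) * Rr x 0 * Rr y (m+1) +
            ∑ i ∈ range (m + 1), ((m+1).choose (i+1) : ℝ) * Rr x (i+1) * Rr y (m - i) := by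
        rw [Finset.sum_range_succ' (fun i => ((m+1).choose i : ℝ) * Rr x i * Rr y (m + 1 - i))]
        simp only [Nat.succ_sub_succ_eq_sub, Nat.sub_zero]
        rw [add_comm]
      rw [e1]
      have e2 : ∀ i ∈ range (m+1), ((m+1).choose (i+1) : ℝ) * Rr x (i+1) * Rr y (m - i)
          = (m.choose i : ℝ) * (Rr x (i+1) * Rr y (m - i))
            + (m.choose (i+1) : ℝ) * Rr x (i+1) * Rr y (m - i) := by
        intro i hi
        rw [Nat.choose_succ_succ]
        push_cast
        ring
      rw [Finset.sum_congr rfl e2, Finset.sum_add_distrib]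
      have e3 : ((m+1).choose 0 : ℝ) * Rr x 0 * Rr y (m+1) +
          (∑ i ∈ range (m+1), (m.choose i : ℝ) * (Rr x (i+1) * Rr y (m - i)) +
           ∑ i ∈ range (m+1), (m.choose (i+1) : ℝ) * Rr x (i+1) * Rr y (m - i))
          = (∑ i ∈ range (m+1), (m.choose i : ℝ) * (Rr x i * Rr y (m + 1 - i)))
            + ∑ i ∈ range (m+1), (m.choose i : ℝ) * (Rr x (i+1) * Rr y (m - i)) := by
        have e4 : ∑ i ∈ range (m+1), (m.choose i : ℝ) * (Rr x i * Rr y (m + 1 - i))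
            = (m.choose 0 : ℝ) * (Rr x 0 * Rr y (m + 1)) +
              ∑ i ∈ range m, (m.choose (i+1) : ℝ) * (Rr x (i+1) * Rr y (m - i)) := by
          rw [Finset.sum_range_succ' (fun i => (m.choose i : ℝ) * (Rr x i * Rr y (m + 1 - i)))]
          simp only [Nat.succ_sub_succ_eq_sub, Nat.sub_zero]
          rw [add_comm]
        have e5 : ∑ i ∈ range (m+1), (m.choose (i+1) : ℝ) * Rr x (i+1) * Rr y (m - i)
            = ∑ i ∈ range m, (m.choose (i+1) : ℝ) * (Rr x (i+1) * Rr y (m - i)) := by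
          rw [Finset.sum_range_succ]
          simp [Nat.choose_succ_self]
          exact Finset.sum_congr rfl (fun i _ => by ring)
        rw [e4, e5]
        simp
        ring
      rw [e3]
      rw [← Finset.sum_add_distrib]
      exact Finset.sum_congr rfl (fun i _ => by ring)
    rw [split, Finset.sum_congr rfl key, ← Finset.mul_sum, ih x y, Rr_succ]
    ring

lemma neg_one_pow_prod (β : ℝ) (l : ℕ) :
    (-1 : ℝ)^l * ∏ t ∈ Finset.range l, (β - t) = Rr (-β) l := by
  induction l with
  | zero => simp [Rr]
  | succ l ih =>
    rw [Finset.prod_range_succ, Rr_succ, pow_succ, ← ih]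
    ring

lemma neg_one_pow_gbinom_mul_factorial (β : ℝ) (l : ℕ) :
    (-1 : ℝ)^l * gbinom β l * (l.factorial : ℝ) = Rr (-β) l := by
  have hl : (l.factorial : ℝ) ≠ 0 := Nat.cast_ne_zero.mpr (Nat.factorial_ne_zero l)
  rw [gbinom, mul_assoc, div_mul_cancel₀ _ hl, neg_one_pow_prod]

lemma scalar_conv (β : ℝ) (m : ℕ) :
    ∑ i ∈ range (m+1), Rr β i * ((-1:ℝ)^(m-i) * gbinom β (m-i)) *
      ((m-i).factorial : ℝ) * (m.choose i : ℝ) = if m = 0 then 1 else 0 := by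
  have h : ∀ i ∈ range (m+1), Rr β i * ((-1:ℝ)^(m-i) * gbinom β (m-i)) *
      ((m-i).factorial : ℝ) * (m.choose i : ℝ)
      = (m.choose i : ℝ) * Rr β i * Rr (-β) (m-i) := by
    intro i _
    rw [← neg_one_pow_gbinom_mul_factorial β (m-i)]
    ring
  rw [Finset.sum_congr rfl h, Rr_vandermonde m β (-β)]
  simp [Rr_zero_left]

lemma hasseDeriv_vanish {u : Polynomial ℝ} {d m : ℕ} (hu : u.natDegree ≤ d) (hm : d < m) :
    Polynomial.hasseDeriv m u = 0 := by
  have h1 : Polynomial.derivative^[m] u = 0 :=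
    Polynomial.iterate_derivative_eq_zero (lt_of_le_of_lt hu hm)
  have h2 := congrFun (Polynomial.factorial_smul_hasseDeriv (R := ℝ) m) u
  simp only [LinearMap.smul_apply] at h2
  rw [h1] at h2
  have h3 : ((m.factorial : ℝ)) • Polynomial.hasseDeriv m u = 0 := by
    rw [← h2, Nat.cast_smul_eq_nsmul]
  rcases smul_eq_zero.mp h3 with h | h
  · exact absurd (Nat.cast_eq_zero.mp h) (Nat.factorial_ne_zero m)
  · exact h

lemma poly_inverse (β : ℝ) (d : ℕ) (u : Polynomial ℝ) (hu : u.natDegree ≤ d) :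
    ∑ i ∈ range (d+1), Polynomial.C (Rr β i) * Polynomial.hasseDeriv i
      (∑ l ∈ range (d+1), Polynomial.C ((-1:ℝ)^l * gbinom β l)
        * Polynomial.derivative^[l] u) = u := by
  have term_eq : ∀ i l : ℕ,
      Polynomial.C (Rr β i) * (Polynomial.C ((-1:ℝ)^l * gbinom β l)
        * Polynomial.hasseDeriv i (Polynomial.derivative^[l] u))
      = Polynomial.C (Rr β i * ((-1:ℝ)^l * gbinom β l) * (l.factorial : ℝ)
          * (((i+l).choose i : ℕ) : ℝ)) * Polynomial.hasseDeriv (i+l) u := by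
    intro i l
    have h1 : Polynomial.derivative^[l] u = l.factorial • Polynomial.hasseDeriv l u := by
      rw [← congrFun (Polynomial.factorial_smul_hasseDeriv (R := ℝ) l) u]
      simp [LinearMap.smul_apply]
    have h2 := LinearMap.congr_fun (Polynomial.hasseDeriv_comp (R := ℝ) i l) u
    simp only [LinearMap.comp_apply, LinearMap.smul_apply] at h2
    rw [h1, map_nsmul, h2, smul_smul, ← Nat.cast_smul_eq_nsmul ℝ, Polynomial.smul_eq_C_mul,
      ← mul_assoc, ← mul_assoc, ← map_mul, ← map_mul]
    congr 1
    push_cast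
    ring
  -- distribute hasseDeriv over the inner sum
  have expand : ∀ i : ℕ, Polynomial.C (Rr β i) * Polynomial.hasseDeriv i
      (∑ l ∈ range (d+1), Polynomial.C ((-1:ℝ)^l * gbinom β l)
        * Polynomial.derivative^[l] u)
      = ∑ l ∈ range (d+1), Polynomial.C (Rr β i * ((-1:ℝ)^l * gbinom β l)
          * (l.factorial : ℝ) * (((i+l).choose i : ℕ) : ℝ))
          * Polynomial.hasseDeriv (i+l) u := by
    intro i
    rw [map_sum, Finset.mul_sum]
    refine Finset.sum_congr rfl (fun l _ => ?_)
    rw [← Polynomial.smul_eq_C_mul ((-1:ℝ)^l * gbinom β l), LinearMap.map_smul,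
      Polynomial.smul_eq_C_mul, term_eq]
  rw [Finset.sum_congr rfl (fun i _ => expand i)]
  -- shrink inner sums: terms with i + l > d vanish
  have shrink : ∀ i ∈ range (d+1),
      ∑ l ∈ range (d+1), Polynomial.C (Rr β i * ((-1:ℝ)^l * gbinom β l)
          * (l.factorial : ℝ) * (((i+l).choose i : ℕ) : ℝ)) * Polynomial.hasseDeriv (i+l) u
      = ∑ l ∈ range (d+1-i), Polynomial.C (Rr β i * ((-1:ℝ)^l * gbinom β l)
          * (l.factorial : ℝ) * (((i+l).choose i : ℕ) : ℝ)) * Polynomial.hasseDeriv (i+l) u := by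
    intro i hi
    refine (Finset.sum_subset (Finset.range_subset_range.mpr (by omega)) ?_).symm
    intro l _ hl
    rw [Finset.mem_range, not_lt] at hl
    rw [hasseDeriv_vanish hu (by omega), mul_zero]
  rw [Finset.sum_congr rfl shrink]
  rw [← Finset.sum_range_diag_flip (d+1) (fun i l => Polynomial.C (Rr β i * ((-1:ℝ)^l * gbinom β l)
          * (l.factorial : ℝ) * (((i+l).choose i : ℕ) : ℝ)) * Polynomial.hasseDeriv (i+l) u)]
  have inner : ∀ m ∈ range (d+1),
      ∑ i ∈ range (m+1), Polynomial.C (Rr β i * ((-1:ℝ)^(m-i) * gbinom β (m-i))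
          * ((m-i).factorial : ℝ) * (((i+(m-i)).choose i : ℕ) : ℝ))
          * Polynomial.hasseDeriv (i+(m-i)) u
      = (if m = 0 then 1 else 0 : ℝ) • Polynomial.hasseDeriv m u := by
    intro m _
    have him : ∀ i ∈ range (m+1), i + (m - i) = m := by
      intro i hi; rw [Finset.mem_range] at hi; omega
    have : ∀ i ∈ range (m+1), Polynomial.C (Rr β i * ((-1:ℝ)^(m-i) * gbinom β (m-i))
          * ((m-i).factorial : ℝ) * (((i+(m-i)).choose i : ℕ) : ℝ))
          * Polynomial.hasseDeriv (i+(m-i)) u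
        = Polynomial.C (Rr β i * ((-1:ℝ)^(m-i) * gbinom β (m-i))
          * ((m-i).factorial : ℝ) * ((m.choose i : ℕ) : ℝ)) * Polynomial.hasseDeriv m u := by
      intro i hi; rw [him i hi]
    rw [Finset.sum_congr rfl this, ← Finset.sum_mul, ← map_sum, scalar_conv β m,
      Polynomial.smul_eq_C_mul]
  rw [Finset.sum_congr rfl inner]
  rw [Finset.sum_eq_single 0]
  · simp [Polynomial.hasseDeriv_zero']
  · intro m _ hm; simp [hm]
  · intro h; simp at h


lemma integrable_poly_mul {f : ℝ → ℝ} {N : ℕ}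
    (hf : ∀ m, m ≤ N → Integrable (fun z : ℝ => z^m * f z))
    (S : Polynomial ℝ) (hS : S.natDegree ≤ N) :
    Integrable (fun z => S.eval z * f z) := by
  have he : (fun z : ℝ => S.eval z * f z) =
      fun z => ∑ m ∈ range (N+1), S.coeff m * (z^m * f z) := by
    funext z
    rw [Polynomial.eval_eq_sum_range' (lt_of_le_of_lt hS (Nat.lt_succ_self N)), Finset.sum_mul]
    exact Finset.sum_congr rfl fun m _ => by ring
  rw [he]
  exact integrable_finset_sum _
    (fun m hm => (hf m (by simpa [Nat.lt_succ_iff] using hm)).const_mul _)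

lemma gammaMomentInt {β : ℝ} (hβ : 0 < β) (i : ℕ) :
    IntegrableOn (fun x : ℝ => x ^ (β-1) * Real.exp (-x) * x ^ i) (Set.Ioi 0) := by
  have h := Real.GammaIntegral_convergent (s := β + i) (by positivity)
  refine h.congr_fun ?_ measurableSet_Ioi
  intro x hx
  have hx0 : (0:ℝ) < x := hx
  show Real.exp (-x) * x ^ (β + i - 1) = x ^ (β - 1) * Real.exp (-x) * x ^ i
  rw [show β + i - 1 = (β - 1) + i by ring, Real.rpow_add hx0, Real.rpow_natCast]
  ring

lemma gammaMomentVal {β : ℝ} (hβ : 0 < β) (i : ℕ) :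
    ∫ x in Set.Ioi (0:ℝ), x ^ (β-1) * Real.exp (-x) * x ^ i = Real.Gamma (β + i) := by
  rw [Real.Gamma_eq_integral (by positivity : (0:ℝ) < β + i)]
  refine setIntegral_congr_fun measurableSet_Ioi ?_
  intro x hx
  have hx0 : (0:ℝ) < x := hx
  show x ^ (β - 1) * Real.exp (-x) * x ^ i = Real.exp (-x) * x ^ (β + i - 1)
  rw [show β + i - 1 = (β - 1) + i by ring, Real.rpow_add hx0, Real.rpow_natCast]
  ring

lemma Gamma_add_nat {β : ℝ} (hβ : 0 < β) (i : ℕ) :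
    Real.Gamma (β + i) = Rr β i * Real.Gamma β := by
  induction i with
  | zero => simp [Rr]
  | succ i ih =>
    have h1 : β + ((i:ℕ)+1 : ℕ) = (β + i) + 1 := by push_cast; ring
    rw [h1, Real.Gamma_add_one (by positivity : (0:ℝ) < β + i).ne', ih]
    have h2 : Rr β (i+1) = Rr β i * (β + i) := by
      simp only [Rr, Finset.prod_range_succ]
    rw [h2]
    ring

lemma key_integral (β : ℝ) (hβ : 0 < β) (N : ℕ) (f : ℝ → ℝ)
    (hf : ∀ m, m ≤ N → Integrable (fun z : ℝ => z^m * f z))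
    (R : Polynomial ℝ) (M : ℕ) (hRM : R.natDegree ≤ M) (hMN : M ≤ N) :
    ∫ y : ℝ, R.eval y * ((1 / Real.Gamma β) *
        ∫ x in Set.Ioi (0:ℝ), x ^ (β-1) * Real.exp (-x) * f (y - x))
    = ∑ i ∈ range (M+1), (Real.Gamma (β + i) / Real.Gamma β) *
        ∫ z : ℝ, (Polynomial.hasseDeriv i R).eval z * f z := by
  set H : ℕ → ℝ → ℝ := fun i z => (Polynomial.hasseDeriv i R).eval z * f z with hH
  have hHint : ∀ i, Integrable (H i) := fun i =>
    integrable_poly_mul hf _ (le_trans (Polynomial.natDegree_hasseDeriv_le R i) (le_trans (Nat.sub_le _ _) (le_trans hRM hMN)))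
  have taylor : ∀ x z : ℝ, R.eval (z + x) =
      ∑ i ∈ range (M+1), (Polynomial.hasseDeriv i R).eval z * x^i := by
    intro x z
    rw [add_comm z x, ← Polynomial.taylor_eval z R x,
      Polynomial.eval_eq_sum_range' (n := M+1)
        (by rw [Polynomial.natDegree_taylor]; omega)]
    exact Finset.sum_congr rfl fun i _ => by rw [Polynomial.taylor_coeff]
  set G : ℝ × ℝ → ℝ :=
    fun pr => (pr.1 ^ (β-1) * Real.exp (-pr.1)) * (f pr.2 * R.eval (pr.2 + pr.1)) with hG
  set ρ : Measure (ℝ × ℝ) := (volume.restrict (Set.Ioi (0:ℝ))).prod volume with hρ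
  have hGsum : ∀ pr : ℝ × ℝ, G pr =
      ∑ i ∈ range (M+1), (pr.1 ^ (β-1) * Real.exp (-pr.1) * pr.1 ^ i) * H i pr.2 := by
    intro pr
    rw [hG]
    simp only
    rw [taylor pr.1 pr.2, Finset.mul_sum]
    rw [Finset.mul_sum]
    exact Finset.sum_congr rfl fun i _ => by simp only [hH]; ring
  have hGint : Integrable G ρ := by
    rw [show G = fun pr => ∑ i ∈ range (M+1),
        (pr.1 ^ (β-1) * Real.exp (-pr.1) * pr.1 ^ i) * H i pr.2 from funext hGsum]
    exact integrable_finset_sum _ fun i _ => (gammaMomentInt hβ i).mul_prod (hHint i)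
  have hT : MeasurePreserving (fun pr : ℝ × ℝ => (pr.1, pr.2 - pr.1)) ρ ρ :=
    measurePreserving_prod_sub (volume.restrict (Set.Ioi (0:ℝ))) volume
  set F : ℝ × ℝ → ℝ :=
    fun pr => (pr.1 ^ (β-1) * Real.exp (-pr.1)) * (f (pr.2 - pr.1) * R.eval pr.2) with hF
  have hFG : F = G ∘ (fun pr : ℝ × ℝ => (pr.1, pr.2 - pr.1)) := by
    funext pr
    simp only [hF, hG, Function.comp_apply, sub_add_cancel]
  have hFint : Integrable F ρ := by
    rw [hFG]
    exact (hT.integrable_comp hGint.aestronglyMeasurable).mpr hGint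
  -- step 1 : rewrite LHS as iterated integral of F
  have step1 : ∀ y : ℝ, R.eval y * ((1 / Real.Gamma β) *
      ∫ x in Set.Ioi (0:ℝ), x ^ (β-1) * Real.exp (-x) * f (y - x))
      = (1 / Real.Gamma β) * ∫ x in Set.Ioi (0:ℝ), F (x, y) := by
    intro y
    have h1 : ∫ x in Set.Ioi (0:ℝ), F (x, y)
        = (∫ x in Set.Ioi (0:ℝ), x ^ (β-1) * Real.exp (-x) * f (y - x)) * R.eval y := by
      rw [← integral_mul_const]
      refine integral_congr_ae (Filter.Eventually.of_forall fun x => ?_)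
      simp only [hF]; ring
    rw [h1]; ring
  rw [integral_congr_ae (Filter.Eventually.of_forall step1), integral_const_mul]
  -- Fubini
  have fub : ∫ y : ℝ, ∫ x in Set.Ioi (0:ℝ), F (x, y)
      = ∫ x in Set.Ioi (0:ℝ), ∫ y : ℝ, F (x, y) := by
    exact (integral_integral_swap (f := fun x y => F (x, y)) (by exact hFint)).symm
  rw [fub]
  -- inner translation
  have inner : ∀ x : ℝ, ∫ y : ℝ, F (x, y) = ∑ i ∈ range (M+1),
      (x ^ (β-1) * Real.exp (-x) * x ^ i) * ∫ z : ℝ, H i z := by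
    intro x
    have h1 : ∀ y : ℝ, F (x, y) = (fun z => G (x, z)) (y - x) := by
      intro y
      simp only [hF, hG, sub_add_cancel]
    rw [integral_congr_ae (Filter.Eventually.of_forall h1),
      integral_sub_right_eq_self (fun z => G (x, z)) x]
    have h2 : ∀ z : ℝ, G (x, z) = ∑ i ∈ range (M+1),
        (x ^ (β-1) * Real.exp (-x) * x ^ i) * H i z := fun z => hGsum (x, z)
    rw [integral_congr_ae (Filter.Eventually.of_forall h2),
      integral_finset_sum _ (fun i _ => (hHint i).const_mul _)]
    exact Finset.sum_congr rfl fun i _ => integral_const_mul _ _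
  rw [setIntegral_congr_fun measurableSet_Ioi (fun x _ => inner x),
    integral_finset_sum _ (fun i _ => ((gammaMomentInt hβ i).mul_const _))]
  rw [Finset.mul_sum]
  refine Finset.sum_congr rfl fun i _ => ?_
  rw [integral_mul_const, gammaMomentVal hβ i]
  ring


/-- Let `p_0, …, p_{n-1}` be monic polynomials with `deg p_j = j` and
`q_0, …, q_{n-1}` integrable functions with `∫ p_j q_k = δ_{jk}` and all moments
`x^m q_k(x)` integrable. If `Q_k(y) = (1/Γ(α+n)) ∫_0^∞ x^{α+n-1} e^{-x} q_k(y-x) dx` and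
`P_j = ∑_i (-1)^i binom(α+n, i) p_j^{(i)}`, then `∫ P_j Q_k = δ_{jk}`. -/
theorem biorthogonality_transfer
    (n : ℕ) (hn : 1 ≤ n) (α : ℝ) (hα : -1 < α)
    (p : Fin n → Polynomial ℝ)
    (hmonic : ∀ j, (p j).Monic) (hdeg : ∀ j, (p j).natDegree = (j : ℕ))
    (q : Fin n → ℝ → ℝ)
    (hqint : ∀ (k : Fin n) (m : ℕ), m ≤ n - 1 → Integrable (fun x : ℝ => x ^ m * q k x))
    (hbi : ∀ j k : Fin n,
      (∫ x : ℝ, (p j).eval x * q k x) = if j = k then (1 : ℝ) else 0)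
    (Q : Fin n → ℝ → ℝ)
    (hQ : ∀ (k : Fin n) (y : ℝ),
      Q k y = (1 / Real.Gamma (α + n)) *
        ∫ x in Set.Ioi (0 : ℝ), x ^ (α + n - 1) * Real.exp (-x) * q k (y - x))
    (P : Fin n → Polynomial ℝ)
    (hP : ∀ j : Fin n,
      P j = ∑ i ∈ Finset.range ((j : ℕ) + 1),
        Polynomial.C ((-1 : ℝ) ^ i * gbinom (α + n) i) * Polynomial.derivative^[i] (p j)) :
    ∀ j k : Fin n, (∫ x : ℝ, (P j).eval x * Q k x) = if j = k then (1 : ℝ) else 0 := by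
  intro j k
  have hn1 : (1:ℝ) ≤ (n:ℝ) := by exact_mod_cast hn
  have hβ : 0 < α + (n:ℝ) := by linarith
  have hΓ : Real.Gamma (α + (n:ℝ)) ≠ 0 := (Real.Gamma_pos_of_pos hβ).ne'
  have hMN : (j : ℕ) ≤ n - 1 := by omega
  have hPdeg : (P j).natDegree ≤ (j : ℕ) := by
    rw [hP j]
    refine Polynomial.natDegree_sum_le_of_forall_le _ _ fun i _ => ?_
    refine le_trans (Polynomial.natDegree_C_mul_le _ _) ?_
    refine le_trans (Polynomial.natDegree_iterate_derivative _ _) ?_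
    rw [hdeg j]; omega
  have step1 : (∫ x : ℝ, (P j).eval x * Q k x)
      = ∫ y : ℝ, (P j).eval y * ((1 / Real.Gamma (α + (n:ℝ))) *
          ∫ x in Set.Ioi (0:ℝ), x ^ (α + (n:ℝ) - 1) * Real.exp (-x) * q k (y - x)) := by
    refine integral_congr_ae (Filter.Eventually.of_forall fun y => ?_)
    show (P j).eval y * Q k y = _
    rw [hQ k y]
  rw [step1, key_integral (α + (n:ℝ)) hβ (n-1) (q k) (hqint k) (P j) (j:ℕ) hPdeg hMN]
  -- rewrite Gamma ratios and pull constants inside the integrals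
  have step2 : ∀ i ∈ range ((j:ℕ)+1),
      (Real.Gamma (α + (n:ℝ) + i) / Real.Gamma (α + (n:ℝ))) *
        ∫ z : ℝ, (Polynomial.hasseDeriv i (P j)).eval z * q k z
      = ∫ z : ℝ, (Polynomial.C (Rr (α + (n:ℝ)) i) *
          Polynomial.hasseDeriv i (P j)).eval z * q k z := by
    intro i _
    rw [Gamma_add_nat hβ i, mul_div_assoc, div_self hΓ, mul_one, ← integral_const_mul]
    refine integral_congr_ae (Filter.Eventually.of_forall fun z => ?_)
    show Rr (α + (n:ℝ)) i * ((Polynomial.hasseDeriv i (P j)).eval z * q k z)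
      = (Polynomial.C (Rr (α + (n:ℝ)) i) * Polynomial.hasseDeriv i (P j)).eval z * q k z
    rw [Polynomial.eval_mul, Polynomial.eval_C]
    ring
  rw [Finset.sum_congr rfl step2]
  have hint : ∀ i ∈ range ((j:ℕ)+1), Integrable (fun z : ℝ =>
      (Polynomial.C (Rr (α + (n:ℝ)) i) * Polynomial.hasseDeriv i (P j)).eval z * q k z) := by
    intro i _
    refine integrable_poly_mul (hqint k) _ ?_
    refine le_trans (Polynomial.natDegree_C_mul_le _ _) ?_
    refine le_trans (Polynomial.natDegree_hasseDeriv_le _ _) ?_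
    omega
  rw [← integral_finset_sum _ hint]
  have step3 : ∀ z : ℝ, (∑ i ∈ range ((j:ℕ)+1),
      (Polynomial.C (Rr (α + (n:ℝ)) i) * Polynomial.hasseDeriv i (P j)).eval z * q k z)
      = (p j).eval z * q k z := by
    intro z
    rw [← Finset.sum_mul, ← Polynomial.eval_finset_sum]
    congr 2
    have := poly_inverse (α + (n:ℝ)) (j:ℕ) (p j) (le_of_eq (hdeg j))
    rw [← hP j] at this
    exact this
  rw [integral_congr_ae (Filter.Eventually.of_forall step3)]
  exact hbi j k
end
end
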